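/- For every integer n ≥ 1, set p = 2n+1, q = 3n+1, r = 6n+5, and f(x,y) = −(q+r)x² + 4qxy − 4(q−p)y² − 4y. Then the maximum of f(a,m) over all integer pairs (a,m) with −p ≤ a ≤ p, a odd, and 0 ≤ m ≤ n equals −n−6, attained at both (a,m) = (1,1) and (a,m) = (1,2). Equivalently, (max f + q + r)/4 = 2n. -/

import Mathlib

/-- The integer-valued quadratic `f(x,y) = −(q+r)x² + 4qxy − 4(q−p)y² − 4y`. -/
def fZ (p q r a m : ℤ) : ℤ :=
  -(q + r) * a ^ 2 + 4 * q * a * m - 4 * (q - p) * m ^ 2 - 4 * m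

lemma fZ_key (n a m : ℤ) (hn : 1 ≤ n) (ha1 : -(2 * n + 1) ≤ a) (ha2 : a ≤ 2 * n + 1)
    (hodd : Odd a) (hm0 : 0 ≤ m) :
    fZ (2 * n + 1) (3 * n + 1) (6 * n + 5) a m ≤ -n - 6 := by
  obtain ⟨k, hk⟩ := hodd
  have hnpos : (0 : ℤ) < n := hn
  rw [← mul_le_mul_iff_right₀ hnpos]
  set S : ℤ := 2 * n * m - (3 * n + 1) * a + 1 with hS
  have hid : n * fZ (2 * n + 1) (3 * n + 1) (6 * n + 5) a m
      = a ^ 2 - 2 * (3 * n + 1) * a + 1 - S ^ 2 := by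
    simp only [hS, fZ]; ring
  rw [hid]
  rcases le_or_gt a (-1) with hneg | hpos
  · -- a ≤ -1 : S ≥ (3n+1)(-a)+1 > 0 since m ≥ 0
    have h1 : (3 * n + 1) * (-a) + 1 ≤ S := by
      have : 0 ≤ 2 * n * m := by positivity
      simp only [hS]; linarith
    have h2 : (0 : ℤ) < (3 * n + 1) * (-a) + 1 := by nlinarith
    nlinarith [mul_nonneg (by linarith : (0:ℤ) ≤ S - ((3 * n + 1) * (-a) + 1))
        (by linarith : (0:ℤ) ≤ S + ((3 * n + 1) * (-a) + 1)),
      sq_nonneg a, mul_le_mul_of_nonneg_left hneg (by positivity : (0:ℤ) ≤ 9 * n ^ 2 + 6 * n)]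
  · have hpos1 : 1 ≤ a := by omega
    rcases le_or_gt a n with hle | hgt
    · -- 1 ≤ a ≤ n : use S = n * j - (a - 1) with j = 2m - 3a odd
      set j : ℤ := 2 * m - 3 * a with hj
      have hSj : S = n * j - (a - 1) := by simp only [hS, hj]; ring
      rcases le_or_gt j 0 with hj0 | hj0
      · have hj1 : j ≤ -1 := by omega
        have h1 : S ≤ -(n - a + 1) := by
          have : n * j ≤ n * (-1) := mul_le_mul_of_nonneg_left hj1 (by linarith)
          rw [hSj]; linarith
        have h2 : (0:ℤ) < n - a + 1 := by linarith
        nlinarith [mul_nonneg (by linarith : (0:ℤ) ≤ -(S) - (n - a + 1))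
            (by linarith : (0:ℤ) ≤ -(S) + (n - a + 1)),
          mul_nonneg (by linarith : (0:ℤ) ≤ n) (by linarith : (0:ℤ) ≤ a - 1)]
      · have hj1 : 1 ≤ j := hj0
        have h1 : n - a + 1 ≤ S := by
          have : n * 1 ≤ n * j := mul_le_mul_of_nonneg_left hj1 (by linarith)
          rw [hSj]; linarith
        have h2 : (0:ℤ) < n - a + 1 := by linarith
        nlinarith [mul_nonneg (by linarith : (0:ℤ) ≤ S - (n - a + 1))
            (by linarith : (0:ℤ) ≤ S + (n - a + 1)),
          mul_nonneg (by linarith : (0:ℤ) ≤ n) (by linarith : (0:ℤ) ≤ a - 1)]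
    · -- n < a ≤ 2n+1 : (3n+1-a)² ≤ 4n² < 8n², trivial
      nlinarith [sq_nonneg S,
        mul_nonneg (by omega : (0:ℤ) ≤ a - n - 1) (by linarith : (0:ℤ) ≤ 5 * n + 1 - a)]

/-- For every integer `n ≥ 1`, with `(p,q,r) = (2 * n + 1, 3 * n + 1, 6 * n + 5)`, the maximum
of `f(a,m)` over integer pairs `(a,m)` with `−p ≤ a ≤ p`, `a` odd, `0 ≤ m ≤ n` equals
`-n - 6`, attained as indicated; equivalently `(max f + q + r)/4 = 2 * n`. -/
theorem stmt_17 (n : ℤ) (hn : 1 ≤ n) :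
    IsGreatest
      {x : ℤ | ∃ a m : ℤ, -(2 * n + 1) ≤ a ∧ a ≤ 2 * n + 1 ∧ Odd a ∧ 0 ≤ m ∧ m ≤ n ∧
        x = fZ (2 * n + 1) (3 * n + 1) (6 * n + 5) a m}
      (-n - 6) ∧
    fZ (2 * n + 1) (3 * n + 1) (6 * n + 5) 1 1 = -n - 6 ∧
    fZ (2 * n + 1) (3 * n + 1) (6 * n + 5) 1 2 = -n - 6 ∧
    ((-n - 6) + ((3 * n + 1) + (6 * n + 5))) / 4 = 2 * n := by
  refine ⟨⟨⟨1, 1, by linarith, by linarith, ⟨0, by ring⟩, by norm_num, hn, ?_⟩, ?_⟩, ?_, ?_, ?_⟩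
  · simp only [fZ]; ring
  · rintro x ⟨a, m, h1, h2, h3, h4, h5, rfl⟩
    exact fZ_key n a m hn h1 h2 h3 h4
  · simp only [fZ]; ring
  · simp only [fZ]; ring
  · omega
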